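/- Let x_1, ..., x_k be nonempty words over an alphabet Σ. The language L = x_1* x_2* ... x_k* (all concatenations of a power of x_1, then a power of x_2, etc.) is co-finite in Σ* if and only if |Σ| = 1 and gcd(|x_1|, ..., |x_k|) = 1. -/

import Mathlib

private def starWord {α : Type} {k : ℕ} (x : Fin k → List α) (e : Fin k → ℕ) : List α :=
  (List.ofFn (fun i => (List.replicate (e i) (x i)).flatten)).flatten

private lemma starWord_length {α : Type} {k : ℕ} (x : Fin k → List α) (e : Fin k → ℕ) :
    (starWord x e).length = ∑ i, e i * (x i).length := by
  simp [starWord, List.length_flatten, List.map_ofFn, Function.comp, List.sum_ofFn,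
    List.map_replicate, List.sum_replicate, smul_eq_mul]

private lemma lin_le_two_pow (c u : ℕ) (hu : 4 * c ≤ u + 3) : c * (u + 1) ≤ 2 ^ u := by
  rcases Nat.eq_zero_or_pos c with rfl | hc
  · simp [Nat.one_le_two_pow]
  obtain ⟨b, hb⟩ : ∃ b, u = (2 * c - 1) + b := ⟨u - (2 * c - 1), by omega⟩
  have hb2 : 2 * c ≤ b + 2 := by omega
  have h1 : 2 * c ≤ 2 ^ (2 * c - 1) := by
    have := Nat.lt_two_pow_self (n := 2 * c - 1); omega
  have h2 : b + 1 ≤ 2 ^ b := Nat.lt_two_pow_self (n := b)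
  have key : c * (u + 1) ≤ (2 * c) * (b + 1) := by
    have hu1 : u + 1 = b + 2 * c := by omega
    rw [hu1]; nlinarith
  calc c * (u + 1) ≤ (2 * c) * (b + 1) := key
    _ ≤ 2 ^ (2 * c - 1) * 2 ^ b := Nat.mul_le_mul h1 h2
    _ = 2 ^ u := by rw [← pow_add, hb]

private lemma exists_pow_gt (k N : ℕ) : ∃ n, N ≤ n ∧ (n + 1) ^ k < 2 ^ n := by
  set s := max (4 * (k + 1)) (N + 1) with hs
  refine ⟨2 ^ s - 1, ?_, ?_⟩
  · have h1 : N + 1 ≤ s := le_max_right _ _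
    have h2 : s < 2 ^ s := Nat.lt_two_pow_self (n := s)
    omega
  · have h0 : 1 ≤ 2 ^ s := Nat.one_le_two_pow
    have hsub : 2 ^ s - 1 + 1 = 2 ^ s := by omega
    rw [hsub, ← pow_mul]
    apply Nat.pow_lt_pow_right one_lt_two
    have hlin : (k + 1) * (s + 1) ≤ 2 ^ s :=
      lin_le_two_pow (k + 1) s (by have := le_max_left (4 * (k + 1)) (N + 1); omega)
    have hs4 : 4 ≤ s := by have := le_max_left (4 * (k + 1)) (N + 1); omega
    nlinarith

private lemma finset_gcd_bezout {β : Type*} [DecidableEq β] (s : Finset β) (f : β → ℕ) :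
    ∃ c : β → ℤ, ((s.gcd f : ℕ) : ℤ) = ∑ i ∈ s, c i * f i := by
  induction s using Finset.induction_on with
  | empty => exact ⟨fun _ => 0, by simp⟩
  | @insert a s ha ih =>
    obtain ⟨c, hc⟩ := ih
    set A := Nat.gcdA (f a) (s.gcd f) with hA
    set B := Nat.gcdB (f a) (s.gcd f) with hB
    have hgcd : (((GCDMonoid.gcd (f a) (s.gcd f) : ℕ)) : ℤ) = (f a) * A + (s.gcd f) * B :=
      Nat.gcd_eq_gcd_ab (f a) (s.gcd f)
    refine ⟨fun i => if i = a then A else c i * B, ?_⟩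
    rw [Finset.gcd_insert, Finset.sum_insert ha]
    beta_reduce
    have h2 : ∑ i ∈ s, (if i = a then A else c i * B) * (f i : ℤ)
        = (∑ i ∈ s, c i * f i) * B := by
      rw [Finset.sum_mul]
      refine Finset.sum_congr rfl fun i hi => ?_
      rw [if_neg (by rintro rfl; exact ha hi)]; ring
    rw [hgcd, hc, h2, if_pos rfl]; ring

private lemma exists_combo {k : ℕ} (hk : 0 < k) (ℓ : Fin k → ℕ) (hℓ : ∀ i, 0 < ℓ i)
    (hg : Finset.univ.gcd ℓ = 1) :
    ∃ N, ∀ n, N ≤ n → ∃ e : Fin k → ℕ, n = ∑ i, e i * ℓ i := by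
  obtain ⟨c, hc⟩ := finset_gcd_bezout Finset.univ ℓ
  rw [hg] at hc
  set i0 : Fin k := ⟨0, hk⟩ with hi0
  set p := ℓ i0 with hp
  have hp0 : 0 < p := hℓ i0
  set d : Fin k → ℕ := fun i => (c i % (p : ℤ)).toNat with hd
  set s := ∑ i, d i * ℓ i with hsdef
  have hs' : (s : ℤ) = ∑ i, (c i % (p : ℤ)) * ℓ i := by
    rw [hsdef]; push_cast [hd]
    refine Finset.sum_congr rfl fun i _ => ?_
    rw [Int.toNat_of_nonneg (Int.emod_nonneg _ (by exact_mod_cast hp0.ne'))]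
  have hc1 : (1 : ℤ) = ∑ i, c i * ℓ i := by exact_mod_cast hc
  have hps1 : (p : ℤ) ∣ (s : ℤ) - 1 := by
    rw [hs', hc1, ← Finset.sum_sub_distrib]
    refine Finset.dvd_sum fun i _ => ?_
    rw [← sub_mul]
    exact Dvd.dvd.mul_right ⟨-(c i / p), by rw [Int.emod_def]; ring⟩ _
  refine ⟨p * s, fun n hn => ?_⟩
  set r := n % p with hr
  have hrlt : r < p := Nat.mod_lt _ hp0
  have hrs : r * s ≤ n :=
    le_trans (Nat.mul_le_mul_right s hrlt.le) hn
  have hdvdZ : (p : ℤ) ∣ (n : ℤ) - r * s := by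
    have h1 : (p : ℤ) ∣ (n : ℤ) - r := by
      refine ⟨(n : ℤ) / p, ?_⟩
      have : (r : ℤ) = (n : ℤ) % p := by rw [hr]; push_cast; ring
      rw [this, Int.emod_def]; ring
    have h2 : (p : ℤ) ∣ (r : ℤ) * ((s : ℤ) - 1) := Dvd.dvd.mul_left hps1 r
    have h3 : (n : ℤ) - r * s = ((n : ℤ) - r) - r * ((s : ℤ) - 1) := by ring
    rw [h3]; exact dvd_sub h1 h2
  have hdvdN : p ∣ n - r * s := by
    have : ((n - r * s : ℕ) : ℤ) = (n : ℤ) - r * s := by push_cast [Nat.cast_sub hrs]; ring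
    exact_mod_cast this ▸ hdvdZ
  set q := (n - r * s) / p with hq
  have hpq : p * q = n - r * s := Nat.mul_div_cancel' hdvdN
  have hn' : n = p * q + r * s := Nat.eq_add_of_sub_eq hrs hpq.symm
  refine ⟨fun i => (if i = i0 then q else 0) + r * d i, ?_⟩
  have hsum : ∑ i, ((if i = i0 then q else 0) + r * d i) * ℓ i = q * p + r * s := by
    simp only [add_mul, Finset.sum_add_distrib]
    congr 1
    · simp [ite_mul, Finset.sum_ite_eq', hp]
    · rw [hsdef, Finset.mul_sum]
      exact Finset.sum_congr rfl fun i _ => mul_assoc _ _ _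
  rw [hsum, hn']
  ring

/-- For nonempty words `x 1, …, x k` over a finite alphabet `Σ`, the language
`x 1∗ x 2∗ ⋯ x k∗` is co-finite iff `|Σ| = 1` and `gcd(|x 1|, …, |x k|) = 1`. -/
theorem product_of_stars_cofinite_iff {α : Type} [Fintype α] (k : ℕ) (hk : 0 < k)
    (x : Fin k → List α) (hx : ∀ i, x i ≠ [])
    (L : Language α)
    (hL : L = {w : List α | ∃ e : Fin k → ℕ,
      w = (List.ofFn (fun i => (List.replicate (e i) (x i)).flatten)).flatten}) :
    Set.Finite ((L : Language α)ᶜ) ↔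
      (Fintype.card α = 1 ∧ Finset.univ.gcd (fun i => (x i).length) = 1) := by
  have hℓpos : ∀ i, 0 < (x i).length := fun i => List.length_pos_iff.mpr (hx i)
  constructor
  · intro hfin
    have hα : Nonempty α := ⟨(x ⟨0, hk⟩).head (hx _)⟩
    set N := hfin.toFinset.sup (fun w => w.length) + 1 with hN
    have hbig : ∀ w : List α, N ≤ w.length → w ∈ L := by
      intro w hw
      by_contra hwL
      have hmem : w ∈ hfin.toFinset := by
        rw [Set.Finite.mem_toFinset]; exact hwL
      have := Finset.le_sup (f := fun w : List α => w.length) hmem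
      omega
    constructor
    · -- |Σ| = 1
      by_contra hcard
      have h1 : 1 ≤ Fintype.card α := @Fintype.card_pos α _ hα
      have h2 : 2 ≤ Fintype.card α := by omega
      obtain ⟨n, hnN, hnlt⟩ := exists_pow_gt k N
      have hall : ∀ v : List.Vector α n,
          ∃ e : Fin k → ℕ, (∀ i, e i ≤ n) ∧ v.1 = starWord x e := by
        intro v
        have hv : v.1 ∈ L := hbig v.1 (by rw [v.2]; exact hnN)
        rw [hL] at hv
        obtain ⟨e, he⟩ := hv
        refine ⟨e, fun i => ?_, he⟩
        have hlen : n = ∑ j, e j * (x j).length := by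
          have := congrArg List.length he
          rw [v.2] at this
          rw [this]; exact starWord_length x e
        calc e i ≤ e i * (x i).length := Nat.le_mul_of_pos_right _ (hℓpos i)
          _ ≤ ∑ j, e j * (x j).length :=
              Finset.single_le_sum (f := fun j => e j * (x j).length)
                (fun j _ => Nat.zero_le _) (Finset.mem_univ i)
          _ = n := hlen.symm
      choose E hE1 hE2 using hall
      have hinj : Function.Injective
          (fun v : List.Vector α n =>
            (fun i => (⟨E v i, Nat.lt_succ_of_le (hE1 v i)⟩ : Fin (n + 1)))) := by
        intro v1 v2 h
        have hE : E v1 = E v2 := funext fun i => congrArg Fin.val (congrFun h i)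
        apply List.Vector.eq
        show v1.1 = v2.1
        rw [hE2 v1, hE2 v2, hE]
      have hcard2 := Fintype.card_le_of_injective _ hinj
      rw [card_vector] at hcard2
      have hcard3 : Fintype.card (Fin k → Fin (n + 1)) = (n + 1) ^ k := by
        simp [Fintype.card_fun]
      rw [hcard3] at hcard2
      have h4 : 2 ^ n ≤ Fintype.card α ^ n := Nat.pow_le_pow_left h2 n
      omega
    · -- gcd = 1
      obtain ⟨a⟩ := hα
      set d := Finset.univ.gcd (fun i => (x i).length) with hd
      have hdp : 0 < d := by
        rcases Nat.eq_zero_or_pos d with h0 | h; swap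
        · exact h
        · exfalso
          have := Finset.gcd_eq_zero_iff.mp (hd ▸ h0) ⟨0, hk⟩ (Finset.mem_univ _)
          have := hℓpos ⟨0, hk⟩
          omega
      by_contra hd1
      have hd2 : 2 ≤ d := by omega
      have hlenw : N ≤ (List.replicate (d * N + 1) a).length := by
        rw [List.length_replicate]
        have : N ≤ d * N := Nat.le_mul_of_pos_left N hdp
        omega
      have hw := hbig _ hlenw
      rw [hL] at hw
      obtain ⟨e, he⟩ := hw
      have hlen : d * N + 1 = ∑ i, e i * (x i).length := by
        have := congrArg List.length he
        rw [List.length_replicate] at this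
        rw [this]; exact starWord_length x e
      have hdvd : d ∣ ∑ i, e i * (x i).length :=
        Finset.dvd_sum fun i _ =>
          Dvd.dvd.mul_left (Finset.gcd_dvd (Finset.mem_univ i)) _
      rw [← hlen] at hdvd
      have : d ∣ 1 := (Nat.dvd_add_right ⟨N, rfl⟩).mp hdvd
      have := Nat.le_of_dvd one_pos this
      omega
  · rintro ⟨hcard, hgcd⟩
    have hsub : Subsingleton α := Fintype.card_le_one_iff_subsingleton.mp (le_of_eq hcard)
    obtain ⟨N, hN⟩ := exists_combo hk (fun i => (x i).length) hℓpos hgcd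
    apply Set.Finite.subset (List.finite_length_lt α N)
    intro w hw
    simp only [Set.mem_setOf_eq]
    by_contra hlen
    push_neg at hlen
    obtain ⟨e, he⟩ := hN w.length (le_of_not_gt (by simpa using hlen))
    apply hw
    rw [hL]
    refine ⟨e, ?_⟩
    have hlen2 : w.length = (starWord x e).length := by rw [starWord_length]; exact he
    apply List.ext_getElem hlen2
    intro i h1 h2
    exact Subsingleton.elim _ _
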